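/- Let a ≤ b be natural numbers and let x_1 < x_2 < ⋯ < x_n be natural numbers in the interval [a, b] such that ξ(x_1) = ξ(x_2) = ⋯ = ξ(x_n). Then the interval [a, b] contains at least n - 1 primes; that is, the number of primes p with a ≤ p ≤ b is at least n - 1. -/

import Mathlib

/-- The prime index function ι(n) = (-1)^π(n), where π is the prime counting
function (number of primes ≤ n). -/
def iota (n : ℕ) : ℤ := (-1) ^ (Nat.primeCounting n)

/-- The second prime index function ξ(x) = ∑_{n=1}^{x} ι(n). -/
def xi (x : ℕ) : ℤ := ∑ n ∈ Finset.Icc 1 x, iota n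

lemma pc_const {a b : ℕ} (hab : a ≤ b)
    (h : ∀ p, a < p → p ≤ b → ¬ p.Prime) :
    Nat.primeCounting b = Nat.primeCounting a := by
  induction b, hab using Nat.le_induction with
  | base => rfl
  | succ b hab ih =>
    have hnp : ¬ (b + 1).Prime := h _ (Nat.lt_succ_of_le hab) le_rfl
    have : Nat.primeCounting (b + 1) = Nat.primeCounting b := by
      unfold Nat.primeCounting Nat.primeCounting'
      rw [Nat.count_succ]
      simp [hnp]
    rw [this]
    exact ih (fun p hp1 hp2 => h p hp1 (le_trans hp2 (Nat.le_succ b)))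

lemma exists_prime_between {a b : ℕ} (hab : a < b) (h : xi a = xi b) :
    ∃ p, p.Prime ∧ a < p ∧ p ≤ b := by
  by_contra hc
  push_neg at hc
  have hsum : ∑ n ∈ Finset.Ioc a b, iota n = 0 := by
    have hxi : ∀ x : ℕ, xi x = ∑ n ∈ Finset.Ioc 0 x, iota n := by
      intro x; unfold xi
      rw [← Finset.Icc_add_one_left_eq_Ioc]; rfl
    have := Finset.sum_Ioc_consecutive iota (Nat.zero_le a) (le_of_lt hab)
    rw [hxi, hxi] at h
    omega
  have hconst : ∀ n ∈ Finset.Ioc a b, iota n = (-1 : ℤ) ^ (Nat.primeCounting a) := by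
    intro n hn
    simp only [Finset.mem_Ioc] at hn
    unfold iota
    rw [pc_const (le_of_lt hn.1) (fun p hp1 hp2 hpr => absurd (hc p hpr hp1) (not_lt.mpr (le_trans hp2 hn.2)))]
  rw [Finset.sum_congr rfl hconst, Finset.sum_const, Nat.card_Ioc] at hsum
  rcases neg_one_pow_eq_or ℤ (Nat.primeCounting a) with h1 | h1 <;>
    rw [h1] at hsum <;> simp at hsum <;> omega

theorem primes_in_interval_of_xi_coincidences (a b n : ℕ) (hab : a ≤ b)
    (x : Fin n → ℕ) (hmono : StrictMono x)
    (hmem : ∀ i, x i ∈ Finset.Icc a b)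
    (hxi : ∀ i j, xi (x i) = xi (x j)) :
    n - 1 ≤ ((Finset.Icc a b).filter Nat.Prime).card := by
  rcases n with _ | m
  · simp
  have key : ∀ i : Fin m, ∃ p, p.Prime ∧ x i.castSucc < p ∧ p ≤ x i.succ := by
    intro i
    exact exists_prime_between (hmono (Fin.castSucc_lt_succ (i := i))) (hxi i.castSucc i.succ)
  choose g hg1 hg2 hg3 using key
  have hinj : Set.InjOn g (Finset.univ : Finset (Fin m)) := by
    have hsm : StrictMono g := by
      intro i j hij
      calc g i ≤ x i.succ := hg3 i
        _ ≤ x j.castSucc := hmono.le_iff_le.mpr (by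
            rw [Fin.lt_def] at hij; rw [Fin.le_def]; simp; omega)
        _ < g j := hg2 j
    exact hsm.injective.injOn
  have hmaps : ∀ i ∈ (Finset.univ : Finset (Fin m)),
      g i ∈ (Finset.Icc a b).filter Nat.Prime := by
    intro i _
    simp only [Finset.mem_filter, Finset.mem_Icc]
    have h1 := hmem i.castSucc
    have h2 := hmem i.succ
    simp only [Finset.mem_Icc] at h1 h2
    exact ⟨⟨le_trans h1.1 (le_of_lt (hg2 i)), le_trans (hg3 i) h2.2⟩, hg1 i⟩
  have := Finset.card_le_card_of_injOn g hmaps hinj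
  simpa using this
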